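/- View trees as graphs as follows: a tree T ⊆ List ℕ (containing the empty list and prefix-closed) is the graph whose vertices are the elements of T and whose edges join each σ ∈ T to its one-step extensions in T. Then: (1) the tree {⟨⟩} consisting of only the empty list has exactly one König cover, namely (∅, ∅); in particular its root is outside the cover of every König cover (it codes the bit 0). (2) For the tree {⟨⟩, ⟨0⟩, ⟨1⟩}, every König cover (C, M) satisfies C = {⟨⟩} and M consists of exactly one of the two edges {⟨⟩,⟨0⟩}, {⟨⟩,⟨1⟩}; in particular the root belongs to the cover of every König cover (it codes the bit 1). -/

import Mathlib

/-- `(C, M)` is a König cover of the simple graph `G`. -/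
def IsKonigCover {V : Type*} (G : SimpleGraph V) (C : Set V) (M : Set (Sym2 V)) : Prop :=
  M ⊆ G.edgeSet ∧
  (M.Pairwise fun e f => ∀ v, v ∈ e → v ∉ f) ∧
  (∀ e ∈ G.edgeSet, ∃ v ∈ e, v ∈ C) ∧
  (∀ e ∈ M, ∃! v, v ∈ e ∧ v ∈ C) ∧
  (∀ v ∈ C, ∃ e ∈ M, v ∈ e)

/-- A tree `T ⊆ List ℕ` viewed as a graph: edges join each `σ ∈ T` to its one-step
extensions in `T`. -/
def treeGraph (T : Set (List ℕ)) : SimpleGraph (List ℕ) where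
  Adj s t := s ∈ T ∧ t ∈ T ∧ ((∃ n, t = s ++ [n]) ∨ ∃ n, s = t ++ [n])
  symm := by
    constructor
    rintro s t ⟨hs, ht, h | h⟩
    · exact ⟨ht, hs, Or.inr h⟩
    · exact ⟨ht, hs, Or.inl h⟩
  loopless := by
    constructor
    rintro s ⟨-, -, ⟨n, h⟩ | ⟨n, h⟩⟩ <;>
      simpa using congrArg List.length h

lemma edgeSet1 : (treeGraph {([] : List ℕ)}).edgeSet = ∅ := by
  ext e
  induction e using Sym2.ind with
  | _ a b =>
    simp only [SimpleGraph.mem_edgeSet, Set.mem_empty_iff_false, iff_false]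
    rintro ⟨ha, hb, h⟩
    simp only [Set.mem_singleton_iff] at ha hb
    subst ha hb
    rcases h with ⟨n, h⟩ | ⟨n, h⟩ <;> simp at h

lemma adj2 (a b : List ℕ) : (treeGraph {[], [0], [1]}).Adj a b ↔
    (a = [] ∧ b = [0]) ∨ (a = [] ∧ b = [1]) ∨ (a = [0] ∧ b = []) ∨ (a = [1] ∧ b = []) := by
  constructor
  · rintro ⟨ha, hb, h⟩
    simp only [Set.mem_insert_iff, Set.mem_singleton_iff] at ha hb
    rcases ha with rfl | rfl | rfl <;> rcases hb with rfl | rfl | rfl <;>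
      rcases h with ⟨n, h⟩ | ⟨n, h⟩ <;> simp_all
  · rintro (⟨rfl, rfl⟩ | ⟨rfl, rfl⟩ | ⟨rfl, rfl⟩ | ⟨rfl, rfl⟩) <;>
      refine ⟨by simp, by simp, ?_⟩
    · exact Or.inl ⟨0, rfl⟩
    · exact Or.inl ⟨1, rfl⟩
    · exact Or.inr ⟨0, rfl⟩
    · exact Or.inr ⟨1, rfl⟩

lemma edgeSet2 : (treeGraph {[], [0], [1]}).edgeSet =
    {s(([] : List ℕ), [0]), s(([] : List ℕ), [1])} := by
  ext e
  induction e using Sym2.ind with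
  | _ a b =>
    rw [SimpleGraph.mem_edgeSet, adj2]
    simp only [Set.mem_insert_iff, Set.mem_singleton_iff, Sym2.eq, Sym2.rel_iff',
      Prod.mk.injEq, Prod.swap_prod_mk]
    tauto

lemma konig2 (C : Set (List ℕ)) (M : Set (Sym2 (List ℕ)))
    (h : IsKonigCover (treeGraph {[], [0], [1]}) C M) :
    C = {([] : List ℕ)} ∧
      (M = {s(([] : List ℕ), [0])} ∨ M = {s(([] : List ℕ), [1])}) := by
  obtain ⟨hM, hpw, hcov, hdual, hC⟩ := h
  set e0 : Sym2 (List ℕ) := s([], [0]) with he0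
  set e1 : Sym2 (List ℕ) := s([], [1]) with he1
  rw [edgeSet2] at hM hcov
  have hne : e0 ≠ e1 := by simp [he0, he1]
  have hnboth : ¬ (e0 ∈ M ∧ e1 ∈ M) := by
    rintro ⟨h0, h1⟩
    exact hpw h0 h1 hne [] (by simp [he0]) (by simp [he1])
  -- M is nonempty
  obtain ⟨v, hv0, hvC⟩ := hcov e0 (by simp [he0])
  obtain ⟨e, heM, hve⟩ := hC v hvC
  -- main case analysis on which edge is in M
  have hMeq : M = {e0} ∨ M = {e1} := by
    have hsub : ∀ f ∈ M, f = e0 ∨ f = e1 := fun f hf => hM hf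
    rcases hsub e heM with rfl | rfl
    · left
      ext f
      simp only [Set.mem_singleton_iff]
      constructor
      · intro hf
        rcases hsub f hf with rfl | rfl
        · rfl
        · exact absurd ⟨heM, hf⟩ hnboth
      · rintro rfl; exact heM
    · right
      ext f
      simp only [Set.mem_singleton_iff]
      constructor
      · intro hf
        rcases hsub f hf with rfl | rfl
        · exact absurd ⟨hf, heM⟩ hnboth
        · rfl
      · rintro rfl; exact heM
  -- now determine C in each case
  rcases hMeq with rfl | rfl
  · refine ⟨?_, Or.inl rfl⟩
    -- [] ∈ C
    obtain ⟨w, hw1, hwC⟩ := hcov e1 (by simp [he1])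
    have hwmem : w = [] ∨ w = [1] := by
      simpa [he1, Sym2.mem_iff] using hw1
    have hnil : ([] : List ℕ) ∈ C := by
      rcases hwmem with rfl | rfl
      · exact hwC
      · exfalso
        obtain ⟨f, hf, hvf⟩ := hC _ hwC
        rw [Set.mem_singleton_iff] at hf
        subst hf
        simp [he0, Sym2.mem_iff] at hvf
    ext x
    simp only [Set.mem_singleton_iff]
    constructor
    · intro hx
      obtain ⟨f, hf, hxf⟩ := hC x hx
      rw [Set.mem_singleton_iff] at hf
      subst hf
      have hx01 : x = [] ∨ x = [0] := by simpa [he0, Sym2.mem_iff] using hxf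
      rcases hx01 with rfl | rfl
      · rfl
      · exfalso
        obtain ⟨u, -, hu⟩ := hdual e0 rfl
        have h1 := hu [] ⟨by simp [he0], hnil⟩
        have h2 := hu [0] ⟨by simp [he0], hx⟩
        simp [h1] at h2
    · rintro rfl; exact hnil
  · refine ⟨?_, Or.inr rfl⟩
    obtain ⟨w, hw1, hwC⟩ := hcov e0 (by simp [he0])
    have hwmem : w = [] ∨ w = [0] := by
      simpa [he0, Sym2.mem_iff] using hw1
    have hnil : ([] : List ℕ) ∈ C := by
      rcases hwmem with rfl | rfl
      · exact hwC
      · exfalso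
        obtain ⟨f, hf, hvf⟩ := hC _ hwC
        rw [Set.mem_singleton_iff] at hf
        subst hf
        simp [he1, Sym2.mem_iff] at hvf
    ext x
    simp only [Set.mem_singleton_iff]
    constructor
    · intro hx
      obtain ⟨f, hf, hxf⟩ := hC x hx
      rw [Set.mem_singleton_iff] at hf
      subst hf
      have hx01 : x = [] ∨ x = [1] := by simpa [he1, Sym2.mem_iff] using hxf
      rcases hx01 with rfl | rfl
      · rfl
      · exfalso
        obtain ⟨u, -, hu⟩ := hdual e1 rfl
        have h1 := hu [] ⟨by simp [he1], hnil⟩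
        have h2 := hu [1] ⟨by simp [he1], hx⟩
        simp [h1] at h2
    · rintro rfl; exact hnil

/-- (1) The tree `{⟨⟩}` has exactly one König cover, namely `(∅, ∅)`; in particular its
root lies outside the cover of every König cover (it codes the bit 0).
(2) For the tree `{⟨⟩, ⟨0⟩, ⟨1⟩}`, every König cover `(C, M)` has `C = {⟨⟩}` and `M`
consisting of exactly one of the two edges; in particular the root lies in the cover of
every König cover (it codes the bit 1). -/
theorem statement8 :
    (∀ (C : Set (List ℕ)) (M : Set (Sym2 (List ℕ))),
      IsKonigCover (treeGraph {[]}) C M ↔ (C = ∅ ∧ M = ∅)) ∧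
    (∀ (C : Set (List ℕ)) (M : Set (Sym2 (List ℕ))),
      IsKonigCover (treeGraph {[]}) C M → [] ∉ C) ∧
    (∀ (C : Set (List ℕ)) (M : Set (Sym2 (List ℕ))),
      IsKonigCover (treeGraph {[], [0], [1]}) C M →
        C = {([] : List ℕ)} ∧
        (M = {s(([] : List ℕ), [0])} ∨ M = {s(([] : List ℕ), [1])})) ∧
    (∀ (C : Set (List ℕ)) (M : Set (Sym2 (List ℕ))),
      IsKonigCover (treeGraph {[], [0], [1]}) C M → [] ∈ C) := by
  have h1 : ∀ (C : Set (List ℕ)) (M : Set (Sym2 (List ℕ))),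
      IsKonigCover (treeGraph {[]}) C M ↔ (C = ∅ ∧ M = ∅) := by
    intro C M
    constructor
    · rintro ⟨hM, -, -, -, hC⟩
      rw [edgeSet1] at hM
      have hMe : M = ∅ := Set.subset_empty_iff.mp hM
      refine ⟨?_, hMe⟩
      ext v
      simp only [Set.mem_empty_iff_false, iff_false]
      intro hv
      obtain ⟨e, he, -⟩ := hC v hv
      rw [hMe] at he
      exact he
    · rintro ⟨rfl, rfl⟩
      refine ⟨by simp, by simp, ?_, by simp, by simp⟩
      rw [edgeSet1]
      simp
  refine ⟨h1, ?_, konig2, ?_⟩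
  · intro C M h
    rw [(h1 C M).mp h |>.1]
    simp
  · intro C M h
    rw [(konig2 C M h).1]; rfl
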